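/- Let α be an NNF, S be a set of states of a discrete variable X, and β = ⋁_{x_k ∈ S} x_k. If variable X occurs in α only inside disjunctions of the form ⋁_{x_k ∈ S'} x_k where S' ⊇ S is a set of states of X, then for every state x_i of X, ∀x_i·(α ∨ β) ≡ (∀x_i·α) ∨ (∀x_i·β). -/

import Mathlib

/-- A discrete formula over variables `V`, where variable `v` has states `σ v`. -/
inductive DForm (V : Type) (σ : V → Type) : Type where
  | top : DForm V σ
  | bot : DForm V σ
  | state : (v : V) → σ v → DForm V σ
  | neg : DForm V σ → DForm V σ
  | conj : DForm V σ → DForm V σ → DForm V σ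
  | disj : DForm V σ → DForm V σ → DForm V σ

namespace DForm

variable {V : Type} {σ : V → Type}

/-- Evaluation of a discrete formula in a world `w`. -/
def eval [∀ v, DecidableEq (σ v)] (w : ∀ v, σ v) : DForm V σ → Bool
  | top => true
  | bot => false
  | state v s => decide (w v = s)
  | neg φ => !(φ.eval w)
  | conj φ ψ => φ.eval w && ψ.eval w
  | disj φ ψ => φ.eval w || ψ.eval w

/-- Two formulas are equivalent when they have the same models. -/
def equiv [∀ v, DecidableEq (σ v)] (φ ψ : DForm V σ) : Prop :=
  ∀ w : ∀ v, σ v, φ.eval w = ψ.eval w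

/-- `φ ⊨ ψ`: every model of `φ` is a model of `ψ`. -/
def entails [∀ v, DecidableEq (σ v)] (φ ψ : DForm V σ) : Prop :=
  ∀ w : ∀ v, σ v, φ.eval w = true → ψ.eval w = true

/-- Conditioning `Δ|x_i`: replace occurrences of `x_i` by `⊤` and of `x_j` (`j ≠ i`) by `⊥`. -/
def cond [DecidableEq V] [∀ v, DecidableEq (σ v)] (v : V) (s : σ v) :
    DForm V σ → DForm V σ
  | top => top
  | bot => bot
  | state u t =>
      if h : u = v then (if h ▸ t = s then top else bot) else state u t
  | neg φ => neg (φ.cond v s)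
  | conj φ ψ => conj (φ.cond v s) (ψ.cond v s)
  | disj φ ψ => disj (φ.cond v s) (ψ.cond v s)

/-- Universal quantification of state `x_i`:
`∀x_i·Δ := (Δ|x_i) ∧ ⋀_{j≠i} (x_i ∨ Δ|x_j)`. -/
noncomputable def quant [DecidableEq V] [∀ v, DecidableEq (σ v)] [∀ v, Fintype (σ v)]
    (v : V) (s : σ v) (Δ : DForm V σ) : DForm V σ :=
  ((Finset.univ.filter (fun j => j ≠ s)).toList).foldr
    (fun j acc => conj (disj (state v s) (Δ.cond v j)) acc) (Δ.cond v s)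

/-- The set of variables occurring in a formula. -/
def vars : DForm V σ → Set V
  | top => ∅
  | bot => ∅
  | state u _ => {u}
  | neg φ => φ.vars
  | conj φ ψ => φ.vars ∪ ψ.vars
  | disj φ ψ => φ.vars ∪ ψ.vars

/-- Whether state `x_i` (the positive literal) occurs in the formula. -/
def stateOccurs (v : V) (s : σ v) : DForm V σ → Prop
  | top => False
  | bot => False
  | state u t => ∃ h : u = v, h ▸ t = s
  | neg φ => φ.stateOccurs v s
  | conj φ ψ => φ.stateOccurs v s ∨ ψ.stateOccurs v s
  | disj φ ψ => φ.stateOccurs v s ∨ ψ.stateOccurs v s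

/-- An NNF only negates states (literals). -/
def isNNF : DForm V σ → Prop
  | top => True
  | bot => True
  | state _ _ => True
  | neg (state _ _) => True
  | neg _ => False
  | conj φ ψ => φ.isNNF ∧ ψ.isNNF
  | disj φ ψ => φ.isNNF ∧ ψ.isNNF

/-- A positive NNF contains no negation at all. -/
def isPositive : DForm V σ → Prop
  | top => True
  | bot => True
  | state _ _ => True
  | neg _ => False
  | conj φ ψ => φ.isPositive ∧ ψ.isPositive
  | disj φ ψ => φ.isPositive ∧ ψ.isPositive

/-- A monotone NNF is positive and has at most one state per variable. -/
def monotone (Δ : DForm V σ) : Prop :=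
  Δ.isPositive ∧ ∀ (v : V) (s t : σ v), Δ.stateOccurs v s → Δ.stateOccurs v t → s = t

/-- ∨-decomposability: disjuncts of every disjunction share no variables. -/
def orDecomposable : DForm V σ → Prop
  | top => True
  | bot => True
  | state _ _ => True
  | neg φ => φ.orDecomposable
  | conj φ ψ => φ.orDecomposable ∧ ψ.orDecomposable
  | disj φ ψ => φ.vars ∩ ψ.vars = ∅ ∧ φ.orDecomposable ∧ ψ.orDecomposable

/-- ∧-decomposability: conjuncts of every conjunction share no variables. -/
def andDecomposable : DForm V σ → Prop
  | top => True
  | bot => True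
  | state _ _ => True
  | neg φ => φ.andDecomposable
  | conj φ ψ => φ.vars ∩ ψ.vars = ∅ ∧ φ.andDecomposable ∧ ψ.andDecomposable
  | disj φ ψ => φ.andDecomposable ∧ ψ.andDecomposable

end DForm

variable {V : Type} {σ : V → Type}

/-- Disjunction of the states in a list: `⋁_{x_k ∈ l} x_k`. -/
def stateDisj (v : V) : List (σ v) → DForm V σ
  | [] => .bot
  | s :: l => .disj (.state v s) (stateDisj v l)

/-- Variable `v` occurs in the formula only inside disjunctions of the form
`⋁_{x_k ∈ S'} x_k` where `S' ⊇ S` is a set of states of `v`. -/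
inductive OnlyIn [∀ v, DecidableEq (σ v)] (v : V) (S : Finset (σ v)) : DForm V σ → Prop where
  | noVar (φ : DForm V σ) : v ∉ φ.vars → OnlyIn v S φ
  | bigDisj (l : List (σ v)) : S ⊆ l.toFinset → OnlyIn v S (stateDisj v l)
  | conj (φ ψ : DForm V σ) : OnlyIn v S φ → OnlyIn v S ψ → OnlyIn v S (.conj φ ψ)
  | disj (φ ψ : DForm V σ) : OnlyIn v S φ → OnlyIn v S ψ → OnlyIn v S (.disj φ ψ)

open DForm in
lemma cond_of_not_mem_vars [DecidableEq V] [∀ v, DecidableEq (σ v)] (v : V) (s : σ v) :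
    ∀ φ : DForm V σ, v ∉ φ.vars → φ.cond v s = φ := by
  intro φ
  induction φ with
  | top => intro _; rfl
  | bot => intro _; rfl
  | state u t =>
      intro h
      simp only [vars, Set.mem_singleton_iff] at h
      simp [DForm.cond, Ne.symm h]
  | neg φ ih => intro h; simp only [vars] at h; simp [DForm.cond, ih h]
  | conj φ ψ ih1 ih2 =>
      intro h
      simp only [vars, Set.mem_union, not_or] at h
      simp [DForm.cond, ih1 h.1, ih2 h.2]
  | disj φ ψ ih1 ih2 =>
      intro h
      simp only [vars, Set.mem_union, not_or] at h
      simp [DForm.cond, ih1 h.1, ih2 h.2]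

open DForm in
lemma eval_cond_stateDisj [DecidableEq V] [∀ v, DecidableEq (σ v)]
    (v : V) (j : σ v) (l : List (σ v)) (w : ∀ v, σ v) :
    ((stateDisj v l).cond v j).eval w = decide (j ∈ l) := by
  induction l with
  | nil => simp [stateDisj, DForm.cond, eval]
  | cons s l ih =>
      have hst : (DForm.state v s).cond v j = if s = j then DForm.top else DForm.bot := by
        simp [DForm.cond]
      show (((DForm.state v s).cond v j).eval w || ((stateDisj v l).cond v j).eval w) = decide (j ∈ s :: l)
      rw [hst, ih]
      by_cases h : s = j
      · subst h; simp [eval]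
      · simp [h, eval, Ne.symm h]

open DForm in
lemma key_mono [DecidableEq V] [∀ v, DecidableEq (σ v)]
    (X : V) (S : Finset (σ X)) (α : DForm V σ) (hα : OnlyIn X S α) (hnnf : α.isNNF)
    (w : ∀ v, σ v) (j j' : σ X) (hj' : j' ∈ S) :
    (α.cond X j).eval w = true → (α.cond X j').eval w = true := by
  induction hα with
  | noVar φ h =>
      rw [cond_of_not_mem_vars X j φ h, cond_of_not_mem_vars X j' φ h]
      exact id
  | bigDisj l hl =>
      intro _
      rw [eval_cond_stateDisj]
      simpa using List.mem_toFinset.mp (hl hj')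
  | conj φ ψ h1 h2 ih1 ih2 =>
      obtain ⟨n1, n2⟩ := hnnf
      simp only [DForm.cond, eval, Bool.and_eq_true]
      exact fun ⟨a, b⟩ => ⟨ih1 n1 a, ih2 n2 b⟩
  | disj φ ψ h1 h2 ih1 ih2 =>
      obtain ⟨n1, n2⟩ := hnnf
      simp only [DForm.cond, eval, Bool.or_eq_true]
      exact fun h => h.elim (fun a => Or.inl (ih1 n1 a)) (fun b => Or.inr (ih2 n2 b))

open DForm in
lemma eval_foldr_quant [DecidableEq V] [∀ v, DecidableEq (σ v)]
    (v : V) (s : σ v) (Δ : DForm V σ) (w : ∀ v, σ v) (l : List (σ v)) (base : DForm V σ) :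
    (l.foldr (fun j acc => conj (disj (state v s) (Δ.cond v j)) acc) base).eval w
      = ((l.all fun j => (decide (w v = s) || (Δ.cond v j).eval w)) && base.eval w) := by
  induction l with
  | nil => simp
  | cons a l ih => simp [eval, ih, Bool.and_assoc]

open DForm in
lemma eval_quant_of_eq [DecidableEq V] [∀ v, DecidableEq (σ v)] [∀ v, Fintype (σ v)]
    (v : V) (s : σ v) (Δ : DForm V σ) (w : ∀ v, σ v) (h : w v = s) :
    (quant v s Δ).eval w = (Δ.cond v s).eval w := by
  rw [quant, eval_foldr_quant]
  simp [h]

open DForm in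
lemma eval_quant_of_ne [DecidableEq V] [∀ v, DecidableEq (σ v)] [∀ v, Fintype (σ v)]
    (v : V) (s : σ v) (Δ : DForm V σ) (w : ∀ v, σ v) (h : w v ≠ s) :
    ((quant v s Δ).eval w = true ↔ ∀ j, (Δ.cond v j).eval w = true) := by
  rw [quant, eval_foldr_quant]
  simp only [h, decide_eq_true_eq, decide_false, Bool.false_or, Bool.and_eq_true,
    List.all_eq_true, Finset.mem_toList, Finset.mem_filter, Finset.mem_univ, true_and]
  constructor
  · rintro ⟨h1, h2⟩ j
    by_cases hj : j = s
    · subst hj; exact h2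
    · exact h1 j hj
  · intro h
    exact ⟨fun j _ => h j, h s⟩

open DForm in
/-- If variable `X` occurs in NNF `α` only inside disjunctions `⋁_{x_k ∈ S'} x_k`
with `S' ⊇ S`, and `β = ⋁_{x_k ∈ S} x_k`, then `∀x_i` distributes over `α ∨ β`. -/
theorem quant_disj_states [DecidableEq V] [∀ v, DecidableEq (σ v)] [∀ v, Fintype (σ v)]
    (X : V) (S : Finset (σ X)) (lS : List (σ X)) (hlS : lS.toFinset = S)
    (α : DForm V σ) (hnnf : α.isNNF) (hα : OnlyIn X S α) (i : σ X) :
    equiv (quant X i (disj α (stateDisj X lS)))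
          (disj (quant X i α) (quant X i (stateDisj X lS))) := by
  intro w
  by_cases hw : w X = i
  · rw [show (disj (quant X i α) (quant X i (stateDisj X lS))).eval w
        = ((quant X i α).eval w || (quant X i (stateDisj X lS)).eval w) from rfl,
      eval_quant_of_eq X i _ w hw, eval_quant_of_eq X i _ w hw, eval_quant_of_eq X i _ w hw]
    rfl
  · rw [Bool.eq_iff_iff]
    rw [show (disj (quant X i α) (quant X i (stateDisj X lS))).eval w
        = ((quant X i α).eval w || (quant X i (stateDisj X lS)).eval w) from rfl]
    rw [eval_quant_of_ne X i _ w hw, Bool.or_eq_true]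
    rw [show (∀ j, (((disj α (stateDisj X lS)).cond X j).eval w = true)) ↔
        (∀ j : σ X, (α.cond X j).eval w = true ∨ ((stateDisj X lS).cond X j).eval w = true) by
      constructor
      · intro h j; have := h j; simpa [DForm.cond, eval, Bool.or_eq_true] using this
      · intro h j; have := h j; simpa [DForm.cond, eval, Bool.or_eq_true] using this]
    constructor
    · intro h
      by_cases hall : ∀ j : σ X, j ∈ lS
      · right
        rw [eval_quant_of_ne X i _ w hw]
        intro j
        rw [eval_cond_stateDisj]
        simpa using hall j
      · left
        push_neg at hall
        obtain ⟨j₀, hj₀⟩ := hall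
        have hj₀a : (α.cond X j₀).eval w = true := by
          rcases h j₀ with ha | hb
          · exact ha
          · rw [eval_cond_stateDisj] at hb; simp at hb; exact absurd hb hj₀
        rw [eval_quant_of_ne X i _ w hw]
        intro j
        rcases h j with ha | hb
        · exact ha
        · rw [eval_cond_stateDisj] at hb
          simp only [decide_eq_true_eq] at hb
          have hjS : j ∈ S := hlS ▸ List.mem_toFinset.mpr hb
          exact key_mono X S α hα hnnf w j₀ j hjS hj₀a
    · rintro (h | h) j
      · left; exact (eval_quant_of_ne X i _ w hw).mp h j
      · right; exact (eval_quant_of_ne X i _ w hw).mp h j
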